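/- Let M be a topological space and σ a spectral family in T(M). Then Spec(σ) = closure(f_σ(D(σ))), i.e., the spectrum of σ equals the closure in ℝ of the image of the function induced by σ on its admissible domain. -/

import Mathlib

open TopologicalSpace

variable {M : Type*} [TopologicalSpace M]

/-- A spectral family in the lattice `T(M)` of open subsets of `M`. -/
def IsSpectralFamilyT (σ : ℝ → Opens M) : Prop :=
  (∀ l m : ℝ, l ≤ m → σ l ≤ σ m) ∧
  (∀ l : ℝ, (σ l : Set M) = interior (⋂ m ∈ Set.Ioi l, (σ m : Set M))) ∧
  interior (⋂ l : ℝ, (σ l : Set M)) = ∅ ∧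
  (⋃ l : ℝ, (σ l : Set M)) = Set.univ

/-- The admissible domain of a spectral family in `T(M)`. -/
def admDomain (σ : ℝ → Opens M) : Set M := {x : M | ∃ l : ℝ, x ∉ σ l}

/-- The function induced by a spectral family in `T(M)`. -/
noncomputable def specFunT (σ : ℝ → Opens M) (x : M) : ℝ := sInf {l : ℝ | x ∈ σ l}

/-- The resolvent set of a spectral family: points near which it is locally constant. -/
def specResolvent (σ : ℝ → Opens M) : Set ℝ :=
  {l : ℝ | ∃ U ∈ nhds l, ∀ m ∈ U, σ m = σ l}

/-- The spectrum of a spectral family. -/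
def spectrumT (σ : ℝ → Opens M) : Set ℝ := (specResolvent σ)ᶜ

/-- The spectrum of a spectral family in `T(M)` is the closure of the image of the
induced function on the admissible domain. -/
theorem spectrumT_eq_closure_image
    {M : Type*} [TopologicalSpace M] {σ : ℝ → Opens M} (hσ : IsSpectralFamilyT σ) :
    spectrumT σ = closure (specFunT σ '' admDomain σ) := by
  obtain ⟨hmono, hreg, hint, huniv⟩ := hσ
  -- basic facts about the set {l | x ∈ σ l}
  have hne : ∀ x : M, {l : ℝ | x ∈ σ l}.Nonempty := by
    intro x
    have : x ∈ ⋃ l : ℝ, (σ l : Set M) := by rw [huniv]; trivial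
    exact Set.mem_iUnion.mp this
  have hbdd : ∀ x ∈ admDomain σ, BddBelow {l : ℝ | x ∈ σ l} := by
    rintro x ⟨l₀, hl₀⟩
    refine ⟨l₀, fun m hm => ?_⟩
    by_contra h
    exact hl₀ (hmono m l₀ (le_of_not_ge h) hm)
  have hmem : ∀ x ∈ admDomain σ, ∀ μ : ℝ, specFunT σ x < μ → x ∈ σ μ := by
    intro x hx μ hμ
    obtain ⟨l, hl, hlμ⟩ := exists_lt_of_csInf_lt (hne x) hμ
    exact hmono l μ hlμ.le hl
  have hnot : ∀ x ∈ admDomain σ, ∀ μ : ℝ, μ < specFunT σ x → x ∉ σ μ := by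
    intro x hx μ hμ h
    exact absurd (csInf_le (hbdd x hx) h) (not_le.mpr hμ)
  have hle : ∀ x ∈ admDomain σ, ∀ b : ℝ, x ∈ σ b → specFunT σ x ≤ b :=
    fun x hx b h => csInf_le (hbdd x hx) h
  -- key rigidity lemma
  have key : ∀ a b : ℝ, a < b →
      (∀ x ∈ admDomain σ, specFunT σ x ∉ Set.Ioc a b) → σ b ≤ σ a := by
    intro a b hab hdisj
    have h1 : (σ b : Set M) ⊆ ⋂ m ∈ Set.Ioi a, (σ m : Set M) := by
      intro x hx
      simp only [Set.mem_iInter, Set.mem_Ioi]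
      intro m hm
      by_cases hxD : x ∈ admDomain σ
      · rcases le_or_gt b m with h | h
        · exact hmono b m h hx
        · have hfb : specFunT σ x ≤ b := hle x hxD b hx
          have hfa : specFunT σ x ≤ a := by
            by_contra hcon
            exact hdisj x hxD ⟨not_le.mp hcon, hfb⟩
          exact hmem x hxD m (lt_of_le_of_lt hfa hm)
      · by_contra h
        exact hxD ⟨m, h⟩
    have h2 : (σ b : Set M) ⊆ (σ a : Set M) := by
      rw [hreg a]
      exact interior_maximal h1 (σ b).isOpen
    exact h2
  ext l
  constructor
  · -- spectrum ⊆ closure of image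
    intro hl
    by_contra hcl
    obtain ⟨ε, hε, hball⟩ :=
      Metric.isOpen_iff.mp isClosed_closure.isOpen_compl l hcl
    apply hl
    refine ⟨Metric.ball l ε, Metric.ball_mem_nhds l hε, ?_⟩
    have hdisj : ∀ x ∈ admDomain σ, specFunT σ x ∉ Metric.ball l ε := by
      intro x hx hmem'
      exact hball hmem' (subset_closure ⟨x, hx, rfl⟩)
    intro m hm
    rw [Real.ball_eq_Ioo] at hm hdisj
    rcases lt_trichotomy m l with h | h | h
    · refine le_antisymm (hmono m l h.le) (key m l h ?_)
      intro x hx hx'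
      refine hdisj x hx ⟨hm.1.trans hx'.1, lt_of_le_of_lt hx'.2 (by linarith)⟩
    · rw [h]
    · refine le_antisymm (key l m h ?_) (hmono l m h.le)
      intro x hx hx'
      refine hdisj x hx ⟨lt_of_lt_of_le (by linarith) hx'.1.le, lt_of_le_of_lt hx'.2 hm.2⟩
  · -- closure of image ⊆ spectrum
    intro hl
    have himg : specFunT σ '' admDomain σ ⊆ spectrumT σ := by
      rintro _ ⟨x, hx, rfl⟩ hres
      obtain ⟨U, hU, hconst⟩ := hres
      obtain ⟨ε, hε, hball⟩ := Metric.mem_nhds_iff.mp hU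
      rw [Real.ball_eq_Ioo] at hball
      have h1 : x ∈ σ (specFunT σ x + ε/2) := hmem x hx _ (by linarith)
      have h2 : x ∉ σ (specFunT σ x - ε/2) := hnot x hx _ (by linarith)
      have e1 : σ (specFunT σ x + ε/2) = σ (specFunT σ x) :=
        hconst _ (hball ⟨by linarith, by linarith⟩)
      have e2 : σ (specFunT σ x - ε/2) = σ (specFunT σ x) :=
        hconst _ (hball ⟨by linarith, by linarith⟩)
      rw [e1] at h1
      rw [e2] at h2
      exact h2 h1
    have hclosed : IsClosed (spectrumT σ) := by
      rw [spectrumT, isClosed_compl_iff, isOpen_iff_mem_nhds]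
      rintro a ⟨U, hU, hconst⟩
      filter_upwards [interior_mem_nhds.mpr hU] with m hm
      refine ⟨interior U, isOpen_interior.mem_nhds hm, fun k hk => ?_⟩
      rw [hconst k (interior_subset hk), hconst m (interior_subset hm)]
    exact closure_minimal himg hclosed hl
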